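/- Assume the sonic condition u₊²(ρ₊+n₊) = A₁γρ₊^γ + A₂αn₊^α and the pressure condition |A₁γρ₊^{γ−1} − A₂αn₊^{α−1}| ≤ √2·|u₊|·min{ (1+ρ₊/n₊)·((γ−1)A₁γρ₊^{γ−1})^{1/2}, (1+n₊/ρ₊)·((α−1)A₂αn₊^{α−1})^{1/2} }. Then both symmetric 2×2 matrices M₁ and M₂ are positive semidefinite. -/

import Mathlib

open Matrix

lemma psd2 (a b c : ℝ) (ha : 0 < a) (h : b^2 ≤ a*c) :
    (!![a,b;b,c]).PosSemidef := by
  rw [Matrix.posSemidef_iff_dotProduct_mulVec]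
  constructor
  · ext i j
    fin_cases i <;> fin_cases j <;> simp [Matrix.conjTranspose_apply]
  · intro x
    have : x 0 * (a * x 0 + b * x 1) + x 1 * (b * x 0 + c * x 1) ≥ 0 := by
      nlinarith [sq_nonneg (a * x 0 + b * x 1), sq_nonneg (x 1), sq_nonneg (x 0)]
    simpa [Matrix.mulVec, dotProduct, Fin.sum_univ_two, Matrix.vecHead, Matrix.vecTail]
      using this


/-- The symmetric matrix `M₁`. -/
noncomputable def M1 (A₁ γ ρp up : ℝ) : Matrix (Fin 2) (Fin 2) ℝ :=
  !![ρp, (up ^ 2 - A₁ * γ * ρp ^ (γ - 1)) / (2 * up);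
     (up ^ 2 - A₁ * γ * ρp ^ (γ - 1)) / (2 * up), A₁ * γ * (γ - 1) * ρp ^ (γ - 2) / 2]

/-- The symmetric matrix `M₂`. -/
noncomputable def M2 (A₂ α np up : ℝ) : Matrix (Fin 2) (Fin 2) ℝ :=
  !![np, (up ^ 2 - A₂ * α * np ^ (α - 1)) / (2 * up);
     (up ^ 2 - A₂ * α * np ^ (α - 1)) / (2 * up), A₂ * α * (α - 1) * np ^ (α - 2) / 2]

/-- under the sonic condition and the pressure condition, both
`M₁` and `M₂` are positive semidefinite. -/
theorem stmt7 (A₁ A₂ γ α ρp np up : ℝ)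
    (hA₁ : 0 < A₁) (hA₂ : 0 < A₂) (hγ : 1 ≤ γ) (hα : 1 ≤ α)
    (hρ : 0 < ρp) (hn : 0 < np) (hu : up < 0)
    (hson : up ^ 2 * (ρp + np) = A₁ * γ * ρp ^ γ + A₂ * α * np ^ α)
    (hp : |A₁ * γ * ρp ^ (γ - 1) - A₂ * α * np ^ (α - 1)| ≤
      Real.sqrt 2 * |up| *
        min ((1 + ρp / np) * Real.sqrt ((γ - 1) * (A₁ * γ * ρp ^ (γ - 1))))
            ((1 + np / ρp) * Real.sqrt ((α - 1) * (A₂ * α * np ^ (α - 1))))) :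
    (M1 A₁ γ ρp up).PosSemidef ∧ (M2 A₂ α np up).PosSemidef := by
  have hγ1 : 0 < γ := lt_of_lt_of_le one_pos hγ
  have hα1 : 0 < α := lt_of_lt_of_le one_pos hα
  have hc₁ : 0 < A₁ * γ * ρp ^ (γ - 1) :=
    mul_pos (mul_pos hA₁ hγ1) (Real.rpow_pos_of_pos hρ _)
  have hc₂ : 0 < A₂ * α * np ^ (α - 1) :=
    mul_pos (mul_pos hA₂ hα1) (Real.rpow_pos_of_pos hn _)
  set c₁ := A₁ * γ * ρp ^ (γ - 1) with hc₁def
  set c₂ := A₂ * α * np ^ (α - 1) with hc₂def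
  have hu2 : 0 < up ^ 2 := by nlinarith
  have hu0 : up ≠ 0 := ne_of_lt hu
  have eρ : ρp ^ (γ - 1) = ρp ^ γ / ρp := by rw [Real.rpow_sub hρ, Real.rpow_one]
  have eρ2 : ρp ^ (γ - 2) = ρp ^ (γ - 1) / ρp := by
    rw [show γ - 2 = γ - 1 - 1 from by ring, Real.rpow_sub hρ, Real.rpow_one]
  have en : np ^ (α - 1) = np ^ α / np := by rw [Real.rpow_sub hn, Real.rpow_one]
  have en2 : np ^ (α - 2) = np ^ (α - 1) / np := by
    rw [show α - 2 = α - 1 - 1 from by ring, Real.rpow_sub hn, Real.rpow_one]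
  have m1 : c₁ * ρp = A₁ * γ * ρp ^ γ := by rw [hc₁def, eρ]; field_simp
  have m2 : c₂ * np = A₂ * α * np ^ α := by rw [hc₂def, en]; field_simp
  have hson' : up ^ 2 * (ρp + np) = c₁ * ρp + c₂ * np := by rw [m1, m2]; exact hson
  have E1 : (up ^ 2 - c₁) * (ρp + np) = np * (c₂ - c₁) := by linear_combination hson'
  have E2 : (up ^ 2 - c₂) * (ρp + np) = ρp * (c₁ - c₂) := by linear_combination hson'
  have hsq2 : Real.sqrt 2 ^ 2 = 2 := Real.sq_sqrt (by norm_num)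
  have hg1 : (0:ℝ) ≤ (γ - 1) * c₁ := mul_nonneg (by linarith) hc₁.le
  have ha1 : (0:ℝ) ≤ (α - 1) * c₂ := mul_nonneg (by linarith) hc₂.le
  have hR1 : |c₁ - c₂| ≤ Real.sqrt 2 * |up| * ((1 + ρp / np) * Real.sqrt ((γ - 1) * c₁)) :=
    hp.trans (mul_le_mul_of_nonneg_left (min_le_left _ _) (by positivity))
  have hR2 : |c₁ - c₂| ≤ Real.sqrt 2 * |up| * ((1 + np / ρp) * Real.sqrt ((α - 1) * c₂)) :=
    hp.trans (mul_le_mul_of_nonneg_left (min_le_right _ _) (by positivity))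
  have P1 : (c₁ - c₂) ^ 2 ≤ 2 * up ^ 2 * (1 + ρp / np) ^ 2 * ((γ - 1) * c₁) := by
    have h := mul_self_le_mul_self (abs_nonneg _) hR1
    calc (c₁ - c₂) ^ 2 = |c₁ - c₂| * |c₁ - c₂| := by rw [← abs_mul, abs_mul_self]; ring
      _ ≤ _ := h
      _ = 2 * up ^ 2 * (1 + ρp / np) ^ 2 * ((γ - 1) * c₁) := by
          rw [show Real.sqrt 2 * |up| * ((1 + ρp / np) * Real.sqrt ((γ - 1) * c₁)) *
              (Real.sqrt 2 * |up| * ((1 + ρp / np) * Real.sqrt ((γ - 1) * c₁))) =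
              (Real.sqrt 2 ^ 2) * (|up| * |up|) * (1 + ρp / np) ^ 2 *
              (Real.sqrt ((γ - 1) * c₁) * Real.sqrt ((γ - 1) * c₁)) from by ring,
            hsq2, abs_mul_abs_self, Real.mul_self_sqrt hg1]
          ring
  have P2 : (c₁ - c₂) ^ 2 ≤ 2 * up ^ 2 * (1 + np / ρp) ^ 2 * ((α - 1) * c₂) := by
    have h := mul_self_le_mul_self (abs_nonneg _) hR2
    calc (c₁ - c₂) ^ 2 = |c₁ - c₂| * |c₁ - c₂| := by rw [← abs_mul, abs_mul_self]; ring
      _ ≤ _ := h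
      _ = 2 * up ^ 2 * (1 + np / ρp) ^ 2 * ((α - 1) * c₂) := by
          rw [show Real.sqrt 2 * |up| * ((1 + np / ρp) * Real.sqrt ((α - 1) * c₂)) *
              (Real.sqrt 2 * |up| * ((1 + np / ρp) * Real.sqrt ((α - 1) * c₂))) =
              (Real.sqrt 2 ^ 2) * (|up| * |up|) * (1 + np / ρp) ^ 2 *
              (Real.sqrt ((α - 1) * c₂) * Real.sqrt ((α - 1) * c₂)) from by ring,
            hsq2, abs_mul_abs_self, Real.mul_self_sqrt ha1]
          ring
  have hfrac1 : (1 + ρp / np) ^ 2 * np ^ 2 = (ρp + np) ^ 2 := by field_simp; ring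
  have hfrac2 : (1 + np / ρp) ^ 2 * ρp ^ 2 = (ρp + np) ^ 2 := by field_simp
  have P1' : np ^ 2 * (c₁ - c₂) ^ 2 ≤ 2 * up ^ 2 * (ρp + np) ^ 2 * ((γ - 1) * c₁) := by
    have h := mul_le_mul_of_nonneg_left P1 (sq_nonneg np)
    calc np ^ 2 * (c₁ - c₂) ^ 2 ≤ np ^ 2 * (2 * up ^ 2 * (1 + ρp / np) ^ 2 * ((γ - 1) * c₁)) := h
      _ = 2 * up ^ 2 * (ρp + np) ^ 2 * ((γ - 1) * c₁) := by
          linear_combination (2 * up ^ 2 * ((γ - 1) * c₁)) * hfrac1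
  have P2' : ρp ^ 2 * (c₁ - c₂) ^ 2 ≤ 2 * up ^ 2 * (ρp + np) ^ 2 * ((α - 1) * c₂) := by
    have h := mul_le_mul_of_nonneg_left P2 (sq_nonneg ρp)
    calc ρp ^ 2 * (c₁ - c₂) ^ 2 ≤ ρp ^ 2 * (2 * up ^ 2 * (1 + np / ρp) ^ 2 * ((α - 1) * c₂)) := h
      _ = 2 * up ^ 2 * (ρp + np) ^ 2 * ((α - 1) * c₂) := by
          linear_combination (2 * up ^ 2 * ((α - 1) * c₂)) * hfrac2
  have hsum : 0 < (ρp + np) ^ 2 := by positivity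
  have B1 : (up ^ 2 - c₁) ^ 2 ≤ 2 * up ^ 2 * ((γ - 1) * c₁) := by
    have key : (up ^ 2 - c₁) ^ 2 * (ρp + np) ^ 2 = np ^ 2 * (c₁ - c₂) ^ 2 := by
      linear_combination ((up ^ 2 - c₁) * (ρp + np) + np * (c₂ - c₁)) * E1
    have h2 := key.trans_le P1'
    exact le_of_mul_le_mul_right (by linarith) hsum
  have B2 : (up ^ 2 - c₂) ^ 2 ≤ 2 * up ^ 2 * ((α - 1) * c₂) := by
    have key : (up ^ 2 - c₂) ^ 2 * (ρp + np) ^ 2 = ρp ^ 2 * (c₁ - c₂) ^ 2 := by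
      linear_combination ((up ^ 2 - c₂) * (ρp + np) + ρp * (c₁ - c₂)) * E2
    have h2 := key.trans_le P2'
    exact le_of_mul_le_mul_right (by linarith) hsum
  constructor
  · rw [M1]
    refine psd2 _ _ _ hρ ?_
    rw [eρ2, div_pow, div_le_iff₀ (by positivity : (0:ℝ) < (2 * up) ^ 2), ← hc₁def]
    have heq : ρp * (A₁ * γ * (γ - 1) * (ρp ^ (γ - 1) / ρp) / 2) * (2 * up) ^ 2 =
        2 * up ^ 2 * ((γ - 1) * c₁) := by rw [hc₁def]; field_simp
    rw [heq]; exact B1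
  · rw [M2]
    refine psd2 _ _ _ hn ?_
    rw [en2, div_pow, div_le_iff₀ (by positivity : (0:ℝ) < (2 * up) ^ 2), ← hc₂def]
    have heq : np * (A₂ * α * (α - 1) * (np ^ (α - 1) / np) / 2) * (2 * up) ^ 2 =
        2 * up ^ 2 * ((α - 1) * c₂) := by rw [hc₂def]; field_simp
    rw [heq]; exact B2
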